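/- Let G be an infinite, connected, non-complete simple graph. Then κ(G) ≤ κ'(G) ≤ δ(G), where κ(G) is the vertex connectivity, κ'(G) the edge connectivity, and δ(G) the minimum degree, all as cardinals. -/

import Mathlib

open Cardinal

universe u

/-- The vertex connectivity of `G`: the least cardinality of a set `S` of
vertices whose removal disconnects `G`. -/
noncomputable def vertexConnectivity {V : Type u} (G : SimpleGraph V) :
    Cardinal.{u} :=
  sInf {c : Cardinal.{u} | ∃ S : Set V, c = #S ∧
    ¬ (G.induce (Sᶜ : Set V)).Preconnected}

/-- The edge connectivity of `G`: the least cardinality of a set `L` of edges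
whose removal disconnects `G`. -/
noncomputable def edgeConnectivity {V : Type u} (G : SimpleGraph V) :
    Cardinal.{u} :=
  sInf {c : Cardinal.{u} | ∃ L : Set (Sym2 V), L ⊆ G.edgeSet ∧ c = #L ∧
    ¬ (G.deleteEdges L).Preconnected}

/-- Every walk from inside `A` to outside `A` contains a vertex of `A` with a
neighbor outside `A`. -/
lemma exists_boundary_left {V : Type u} {G : SimpleGraph V} (A : Set V) :
    ∀ {x y : V} (p : G.Walk x y), x ∈ A → y ∉ A →
      ∃ z ∈ p.support, z ∈ A ∧ ∃ w, w ∉ A ∧ G.Adj z w := by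
  intro x y p
  induction p with
  | nil => intro hx hy; exact absurd hx hy
  | @cons x m y h p ih =>
    intro hx hy
    by_cases hm : m ∈ A
    · obtain ⟨z, hz, hzp⟩ := ih hm hy
      exact ⟨z, by simp [hz], hzp⟩
    · exact ⟨x, by simp, hx, m, hm, h⟩

/-- Every walk from inside `A` to outside `A` contains a vertex outside `A`
with a neighbor inside `A`. -/
lemma exists_boundary_right {V : Type u} {G : SimpleGraph V} (A : Set V) :
    ∀ {x y : V} (p : G.Walk x y), x ∈ A → y ∉ A →
      ∃ z ∈ p.support, z ∉ A ∧ ∃ w, w ∈ A ∧ G.Adj w z := by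
  intro x y p
  induction p with
  | nil => intro hx hy; exact absurd hx hy
  | @cons x m y h p ih =>
    intro hx hy
    by_cases hm : m ∈ A
    · obtain ⟨z, hz, hzp⟩ := ih hm hy
      exact ⟨z, by simp [hz], hzp⟩
    · exact ⟨m, by simp, hm, x, hx, h⟩

/-- If every `G`-walk between `a'` and `b'` meets `S`, and `a', b' ∉ S`, then
removing `S` disconnects. -/
lemma not_preconnected_of_sep {V : Type u} {G : SimpleGraph V} {S : Set V}
    {a' b' : V} (ha : a' ∉ S) (hb : b' ∉ S)
    (hsep : ∀ p : G.Walk a' b', ∃ z ∈ p.support, z ∈ S) :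
    ¬ (G.induce (Sᶜ : Set V)).Preconnected := by
  intro h
  obtain ⟨q⟩ := h ⟨a', ha⟩ ⟨b', hb⟩
  obtain ⟨z, hz, hzS⟩ := hsep (q.map (SimpleGraph.Embedding.induce Sᶜ).toHom)
  erw [SimpleGraph.Walk.support_map] at hz
  obtain ⟨z', _, rfl⟩ := List.mem_map.mp hz
  exact z'.2 hzS

lemma vertexConnectivity_le_of_edgeCut {V : Type u} [Infinite V]
    (G : SimpleGraph V) (hnc : G ≠ (⊤ : SimpleGraph V)) (L : Set (Sym2 V))
    (hd : ¬ (G.deleteEdges L).Preconnected) :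
    vertexConnectivity G ≤ #L := by
  rw [SimpleGraph.Preconnected] at hd
  push_neg at hd
  obtain ⟨a, b, hab⟩ := hd
  set A : Set V := {x | (G.deleteEdges L).Reachable a x} with hA
  have haA : a ∈ A := SimpleGraph.Reachable.refl a
  have hbA : b ∉ A := hab
  -- every crossing edge is in L
  have hcross : ∀ x ∈ A, ∀ y, y ∉ A → G.Adj x y → s(x, y) ∈ L := by
    intro x hx y hy hadj
    by_contra hL'
    exact hy (hx.trans (SimpleGraph.Adj.reachable
      ((SimpleGraph.deleteEdges_adj).2 ⟨hadj, hL'⟩)))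
  set S₁ : Set V := {x | x ∈ A ∧ ∃ y, y ∉ A ∧ G.Adj x y} with hS₁
  set S₂ : Set V := {y | y ∉ A ∧ ∃ x, x ∈ A ∧ G.Adj x y} with hS₂
  have hS₁card : #S₁ ≤ #L := by
    have hf : ∀ x : S₁, s((x : V), x.2.2.choose) ∈ L :=
      fun x => hcross x x.2.1 _ x.2.2.choose_spec.1 x.2.2.choose_spec.2
    refine Cardinal.mk_le_of_injective (f := fun x : S₁ => (⟨_, hf x⟩ : L)) ?_
    intro x₁ x₂ hx
    simp only [Subtype.mk.injEq, Sym2.eq_iff] at hx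
    rcases hx with ⟨h1, _⟩ | ⟨h1, h2⟩
    · exact Subtype.ext h1
    · exact absurd (h2 ▸ x₂.2.1) x₁.2.2.choose_spec.1
  have hS₂card : #S₂ ≤ #L := by
    have hf : ∀ y : S₂, s(y.2.2.choose, (y : V)) ∈ L :=
      fun y => hcross _ y.2.2.choose_spec.1 _ y.2.1 y.2.2.choose_spec.2
    refine Cardinal.mk_le_of_injective (f := fun y : S₂ => (⟨_, hf y⟩ : L)) ?_
    intro y₁ y₂ hy
    simp only [Subtype.mk.injEq, Sym2.eq_iff] at hy
    rcases hy with ⟨_, h2⟩ | ⟨h1, h2⟩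
    · exact Subtype.ext h2
    · exfalso
      have : (y₁ : V) ∈ A := h2 ▸ y₂.2.2.choose_spec.1
      exact y₁.2.1 this
  by_cases hcase1 : ∃ a' ∈ A, a' ∉ S₁
  · obtain ⟨a', ha'A, ha'S⟩ := hcase1
    have hdisc : ¬ (G.induce ((S₁ : Set V)ᶜ)).Preconnected := by
      refine not_preconnected_of_sep ha'S (fun hb' => hbA hb'.1) ?_
      intro p
      obtain ⟨z, hz, hzA, hw⟩ := exists_boundary_left A p ha'A hbA
      exact ⟨z, hz, hzA, hw⟩
    calc vertexConnectivity G ≤ #S₁ := csInf_le' ⟨S₁, rfl, hdisc⟩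
      _ ≤ #L := hS₁card
  by_cases hcase2 : ∃ b' : V, b' ∉ A ∧ b' ∉ S₂
  · obtain ⟨b', hb'A, hb'S⟩ := hcase2
    have hdisc : ¬ (G.induce ((S₂ : Set V)ᶜ)).Preconnected := by
      refine not_preconnected_of_sep (fun ha' => ha'.1 haA) hb'S ?_
      intro p
      obtain ⟨z, hz, hzA, hw⟩ := exists_boundary_right A p haA hb'A
      exact ⟨z, hz, hzA, hw⟩
    calc vertexConnectivity G ≤ #S₂ := csInf_le' ⟨S₂, rfl, hdisc⟩
      _ ≤ #L := hS₂card
  -- remaining case : V = S₁ ∪ S₂, so #V ≤ #L and L is infinite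
  push_neg at hcase1 hcase2
  have hunion : S₁ ∪ S₂ = Set.univ := by
    ext v
    simp only [Set.mem_union, Set.mem_univ, iff_true]
    by_cases hv : v ∈ A
    · exact Or.inl (hcase1 v hv)
    · exact Or.inr (hcase2 v hv)
  have hVle : #V ≤ #L + #L := by
    calc #V = #(S₁ ∪ S₂ : Set V) := by rw [hunion, Cardinal.mk_univ]
      _ ≤ #S₁ + #S₂ := Cardinal.mk_union_le _ _
      _ ≤ #L + #L := add_le_add hS₁card hS₂card
  have hLinf : ℵ₀ ≤ #L := by
    by_contra hfin
    push_neg at hfin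
    have : #V < ℵ₀ := lt_of_le_of_lt hVle
      (Cardinal.add_lt_aleph0 hfin hfin)
    exact absurd (Cardinal.infinite_iff.1 ‹Infinite V›) (not_le.2 this)
  have hVL : #V ≤ #L := by rwa [Cardinal.add_eq_self hLinf] at hVle
  -- use non-completeness
  have hxy : ∃ x y : V, x ≠ y ∧ ¬ G.Adj x y := by
    by_contra hc
    push_neg at hc
    refine hnc ?_
    ext x y
    simp only [SimpleGraph.top_adj]
    exact ⟨fun h => h.ne, fun h => hc x y h⟩
  obtain ⟨x, y, hxy, hnadj⟩ := hxy
  have hdisc : ¬ (G.induce ((({x, y} : Set V)ᶜ)ᶜ : Set V)).Preconnected := by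
    intro h
    obtain ⟨q⟩ := h ⟨x, by simp⟩ ⟨y, by simp⟩
    have hne : (⟨x, by simp⟩ : (({x, y} : Set V)ᶜᶜ : Set V)) ≠ ⟨y, by simp⟩ := by
      simp [Subtype.ext_iff, hxy]
    have hadj := q.adj_snd (SimpleGraph.Walk.not_nil_of_ne hne)
    set w := q.getVert 1 with hwdef
    have hw : (w : V) ∈ ({x, y} : Set V) := by simpa using w.2
    have hadj' : G.Adj x (w : V) := hadj
    rcases hw with hw | hw
    · exact G.irrefl (hw ▸ hadj')
    · exact hnadj (hw ▸ hadj')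
  calc vertexConnectivity G ≤ #↥(({x, y} : Set V)ᶜ) :=
        csInf_le' ⟨({x, y} : Set V)ᶜ, rfl, hdisc⟩
    _ ≤ #V := Cardinal.mk_set_le _
    _ ≤ #L := hVL

lemma incidence_cut {V : Type u} [Infinite V] (G : SimpleGraph V) (v : V) :
    ¬ (G.deleteEdges (G.incidenceSet v)).Preconnected := by
  intro h
  obtain ⟨u, hu⟩ := exists_ne v
  obtain ⟨q⟩ := h v u
  have hadj := q.adj_snd (SimpleGraph.Walk.not_nil_of_ne (Ne.symm hu))
  rw [SimpleGraph.deleteEdges_adj] at hadj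
  exact hadj.2 ⟨hadj.1, Sym2.mem_mk_left _ _⟩

theorem vertexConnectivity_le_edgeConnectivity_le_minDegree {V : Type u}
    [Infinite V] (G : SimpleGraph V) (hconn : G.Connected)
    (hnc : G ≠ (⊤ : SimpleGraph V)) :
    vertexConnectivity G ≤ edgeConnectivity G ∧
      edgeConnectivity G ≤ ⨅ v : V, #(G.neighborSet v) := by
  have hmem : ∀ v : V, #(G.incidenceSet v) ∈
      {c : Cardinal.{u} | ∃ L : Set (Sym2 V), L ⊆ G.edgeSet ∧ c = #L ∧
        ¬ (G.deleteEdges L).Preconnected} :=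
    fun v => ⟨G.incidenceSet v, G.incidenceSet_subset v, rfl, incidence_cut G v⟩
  constructor
  · refine le_csInf ⟨_, hmem (Classical.arbitrary V)⟩ ?_
    rintro c ⟨L, hL, rfl, hd⟩
    exact vertexConnectivity_le_of_edgeCut G hnc L hd
  · refine le_ciInf fun v => ?_
    calc edgeConnectivity G ≤ #(G.incidenceSet v) := csInf_le' (hmem v)
      _ = #(G.neighborSet v) := by
        classical
        exact Cardinal.mk_congr (G.incidenceSetEquivNeighborSet v)
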